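/- Let A be a finite abelian group, Δ a self-adjoint negative-semidefinite operator on ℝ^A (e.g. the discrete Laplacian), and V : A → ℝ with |V(y)| < 2 for all y. For f : A → ℝ let w₊, w₋ solve [−Δ + 2 + V]w₊ = f and [−Δ + 2 − V]w₋ = f. Then ⟨w₊ w₋⟩ ≥ 0, where ⟨·⟩ denotes the average over A. -/
import Mathlib


theorem stmt_8 (A : Type*) [AddCommGroup A] [Fintype A]
    (Δ : (A → ℝ) →ₗ[ℝ] (A → ℝ))
    (hsym : ∀ f g : A → ℝ, ∑ x, f x * Δ g x = ∑ x, g x * Δ f x)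
    (hneg : ∀ f : A → ℝ, ∑ x, f x * Δ f x ≤ 0)
    (V : A → ℝ) (hV : ∀ y, |V y| < 2)
    (f wp wm : A → ℝ)
    (hwp : ∀ y, -(Δ wp) y + (2 + V y) * wp y = f y)
    (hwm : ∀ y, -(Δ wm) y + (2 - V y) * wm y = f y) :
    (∑ y, wp y * wm y) / (Fintype.card A : ℝ) ≥ 0 := by
  classical
  -- The operator L = -Δ + (2 - V) as a linear map
  set L : (A → ℝ) →ₗ[ℝ] (A → ℝ) :=
    { toFun := fun g y => -(Δ g) y + (2 - V y) * g y
      map_add' := by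
        intro a b; funext y; simp only [map_add, Pi.add_apply]; ring
      map_smul' := by
        intro c a; funext y
        simp only [map_smul, Pi.smul_apply, smul_eq_mul, RingHom.id_apply]; ring } with hLdef
  have hLapp : ∀ g y, L g y = -(Δ g) y + (2 - V y) * g y := fun g y => rfl
  -- L is injective
  have hLinj : Function.Injective L := by
    rw [← LinearMap.ker_eq_bot, LinearMap.ker_eq_bot']
    intro g hg
    have h0 : ∑ y, g y * L g y = 0 := by rw [hg]; simp
    have h1 : ∑ y, g y * L g y
        = -(∑ y, g y * Δ g y) + ∑ y, (2 - V y) * g y ^ 2 := by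
      rw [← Finset.sum_neg_distrib, ← Finset.sum_add_distrib]
      refine Finset.sum_congr rfl fun y _ => ?_
      rw [hLapp]; ring
    have h2 : ∑ y, (2 - V y) * g y ^ 2 ≤ 0 := by
      have := hneg g; linarith [h0, h1]
    have h3 : ∀ y ∈ Finset.univ, (0:ℝ) ≤ (2 - V y) * g y ^ 2 := by
      intro y _
      have := abs_lt.mp (hV y)
      nlinarith [sq_nonneg (g y)]
    have h4 : ∑ y, (2 - V y) * g y ^ 2 = 0 :=
      le_antisymm h2 (Finset.sum_nonneg h3)
    have h5 := (Finset.sum_eq_zero_iff_of_nonneg h3).mp h4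
    funext y
    have := h5 y (Finset.mem_univ y)
    have hv := abs_lt.mp (hV y)
    have : g y ^ 2 = 0 := by nlinarith
    simpa [pow_eq_zero_iff] using this
  -- hence surjective (finite dimension), get u with L u = wp
  have hLsurj : Function.Surjective L :=
    (LinearMap.injective_iff_surjective).mp hLinj
  obtain ⟨u, hu⟩ := hLsurj wp
  -- self-adjointness of L
  have hsymL : ∀ g h : A → ℝ, ∑ y, g y * L h y = ∑ y, h y * L g y := by
    intro g h
    have e1 : ∑ y, g y * L h y
        = -(∑ y, g y * Δ h y) + ∑ y, (2 - V y) * (g y * h y) := by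
      rw [← Finset.sum_neg_distrib, ← Finset.sum_add_distrib]
      refine Finset.sum_congr rfl fun y _ => ?_
      rw [hLapp]; ring
    have e2 : ∑ y, h y * L g y
        = -(∑ y, h y * Δ g y) + ∑ y, (2 - V y) * (g y * h y) := by
      rw [← Finset.sum_neg_distrib, ← Finset.sum_add_distrib]
      refine Finset.sum_congr rfl fun y _ => ?_
      rw [hLapp]; ring
    rw [e1, e2, hsym g h]
  -- L wm = f
  have hLwm : L wm = f := by funext y; rw [hLapp]; exact hwm y
  -- key rewriting: ∑ wp wm = ∑ u f
  have step1 : ∑ y, wp y * wm y = ∑ y, u y * f y := by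
    calc ∑ y, wp y * wm y = ∑ y, wm y * L u y := by
          rw [hu]; exact Finset.sum_congr rfl fun y _ => mul_comm _ _
      _ = ∑ y, u y * L wm y := (hsymL u wm).symm
      _ = ∑ y, u y * f y := by rw [hLwm]
  -- ∑ u f = ∑ (L u) (P u) where P = -Δ + (2+V)
  have step2 : ∑ y, u y * f y = ∑ y, L u y * (-(Δ u) y + (2 + V y) * u y) := by
    calc ∑ y, u y * f y
        = ∑ y, u y * (-(Δ wp) y + (2 + V y) * wp y) := by
          exact Finset.sum_congr rfl fun y _ => by rw [hwp y]
      _ = -(∑ y, u y * Δ wp y) + ∑ y, (2 + V y) * (u y * wp y) := by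
          rw [← Finset.sum_neg_distrib, ← Finset.sum_add_distrib]
          exact Finset.sum_congr rfl fun y _ => by ring
      _ = -(∑ y, wp y * Δ u y) + ∑ y, (2 + V y) * (u y * wp y) := by
          rw [hsym u wp]
      _ = ∑ y, wp y * (-(Δ u) y + (2 + V y) * u y) := by
          rw [← Finset.sum_neg_distrib, ← Finset.sum_add_distrib]
          exact Finset.sum_congr rfl fun y _ => by ring
      _ = ∑ y, L u y * (-(Δ u) y + (2 + V y) * u y) := by
          rw [← hu]
  -- positivity of ∑ (L u)(P u)
  have step3 : (0:ℝ) ≤ ∑ y, L u y * (-(Δ u) y + (2 + V y) * u y) := by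
    have e : ∀ y, L u y * (-(Δ u) y + (2 + V y) * u y)
        = ((Δ u y) ^ 2 + (4 - (V y) ^ 2) * (u y) ^ 2) - 4 * (u y * Δ u y) := by
      intro y; rw [hLapp]; ring
    have : ∑ y, L u y * (-(Δ u) y + (2 + V y) * u y)
        = (∑ y, ((Δ u y) ^ 2 + (4 - (V y) ^ 2) * (u y) ^ 2))
          - 4 * ∑ y, u y * Δ u y := by
      rw [Finset.mul_sum, ← Finset.sum_sub_distrib]
      exact Finset.sum_congr rfl fun y _ => e y
    rw [this]
    have hA : (0:ℝ) ≤ ∑ y, ((Δ u y) ^ 2 + (4 - (V y) ^ 2) * (u y) ^ 2) := by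
      refine Finset.sum_nonneg fun y _ => ?_
      obtain ⟨h1, h2⟩ := abs_lt.mp (hV y)
      have hp : (0:ℝ) < (2 - V y) * (2 + V y) := by nlinarith
      nlinarith [sq_nonneg (Δ u y), mul_nonneg hp.le (sq_nonneg (u y))]
    have hB := hneg u
    linarith
  have hnum : (0:ℝ) ≤ ∑ y, wp y * wm y := by
    rw [step1, step2]; exact step3
  exact div_nonneg hnum (Nat.cast_nonneg _)
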